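/- Let q ≥ 2 and let Γ = ℤ_q ≀ ℤ. Define Φ : Γ → DL(q,q) by Φ(η,k) = x₁x₂, where x₁ = (η_k⁻, k) ∈ T_q with η_k⁻(n) = η(k+n) for n ≤ 0 and η_k⁻(n) = 0 for n > 0, and x₂ = (η_k⁺, −k) ∈ T_q with η_k⁺(n) = η(k+1−n) for n ≤ 0 and η_k⁺(n) = 0 for n > 0. Then Φ is a bijection, and for all g, h ∈ Γ, the vertices Φ(g) and Φ(h) are adjacent in DL(q,q) if and only if h = g·s for some s in the symmetric generating set {(δ₁^ℓ, 1) : ℓ ∈ ZMod q} ∪ {(δ₀^ℓ, −1) : ℓ ∈ ZMod q}; that is, Φ is an isomorphism from the right Cayley graph of Γ with respect to this generating set onto DL(q,q). -/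
import Mathlib


open scoped Classical

noncomputable section

namespace LampDL

variable {X : Type*}

/-- `n`-step transition probabilities of the Markov chain with transition matrix `p`. -/
def matpow (p : X → X → ℝ) : ℕ → X → X → ℝ
  | 0 => fun x y => if x = y then 1 else 0
  | n + 1 => fun x y => ∑' z, p x z * matpow p n z y

/-- A (countable) stochastic transition matrix. -/
def IsStochastic (p : X → X → ℝ) : Prop :=
  (∀ x y, 0 ≤ p x y) ∧ ∀ x, HasSum (p x) 1

/-- Irreducibility: some power has positive entry for every pair. -/
def IsIrreducible (p : X → X → ℝ) : Prop := ∀ x y, ∃ n, 0 < matpow p n x y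

/-- `hitBefore p A y n x` is the probability that the chain started at `x` avoids `A`
at all times `< n` and is at `y` at time `n`.  For `y ∈ A`, summing over `n` yields
`F^A(x,y) = Pr_x[s^y ≤ s^A, s^y < ∞]`. -/
def hitBefore (p : X → X → ℝ) (A : Set X) (y : X) : ℕ → X → ℝ
  | 0 => fun x => if x = y then 1 else 0
  | n + 1 => fun x => if x ∈ A then 0 else ∑' z, p x z * hitBefore p A y n z

/-- `F^A(x,y) = Pr_x[s^y ≤ s^A, s^y < ∞]` (for `y ∈ A`). -/
def FA (p : X → X → ℝ) (A : Set X) (x y : X) : ℝ := ∑' n, hitBefore p A y n x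

/-- `F(x,y) = Pr_x[s^y < ∞]`, the probability of ever hitting `y` from `x`. -/
def Fhit (p : X → X → ℝ) (x y : X) : ℝ := FA p {y} x y

/-- A function is `P`-harmonic if `∑_y p(x,y) h(y) = h(x)` for every `x`. -/
def IsHarmonic (p : X → X → ℝ) (h : X → ℝ) : Prop := ∀ x, ∑' y, p x y * h y = h x

/-- A minimal harmonic function (w.r.t. the reference point `o`). -/
def IsMinimalHarmonic (p : X → X → ℝ) (o : X) (h : X → ℝ) : Prop :=
  IsHarmonic p h ∧ (∀ x, 0 ≤ h x) ∧ h o = 1 ∧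
    ∀ h₁ : X → ℝ, IsHarmonic p h₁ → (∀ x, 0 ≤ h₁ x) → (∀ x, h₁ x ≤ h x) →
      ∃ c : ℝ, ∀ x, h₁ x = c * h x

/-- Vertices of the homogeneous tree `T_q`, modelled as pairs `(σ, k)` where
`σ : ℤ → ZMod q` is finitely supported with `σ n = 0` for `n > 0`. -/
structure TV (q : ℕ) where
  σ : ℤ → ZMod q
  k : ℤ
  fin : (Function.support σ).Finite
  upz : ∀ n : ℤ, 0 < n → σ n = 0

lemma fin_aux {q : ℕ} (g : ℤ → ZMod q) (hg : (Function.support g).Finite)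
    (f : ℤ → ℤ) (hf : Function.Injective f) :
    (Function.support fun n => if n ≤ 0 then g (f n) else 0).Finite := by
  refine Set.Finite.subset (hg.preimage hf.injOn) ?_
  intro n hn
  simp only [Function.mem_support] at hn
  by_cases hle : n ≤ 0
  · simp only [hle, if_true] at hn
    simpa [Set.mem_preimage, Function.mem_support] using hn
  · simp [hle] at hn

/-- The predecessor `x⁻` of a vertex of `T_q` (w.r.t. the reference end `ω`). -/
def pred {q : ℕ} (x : TV q) : TV q where
  σ := fun n => if n ≤ 0 then x.σ (n - 1) else 0
  k := x.k - 1
  fin := fin_aux x.σ x.fin (fun n => n - 1) sub_left_injective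
  upz := fun n hn => by simp [not_le.mpr hn]

/-- The vertex on the geodesic `ω o` at Busemann level `k` (zero configuration). -/
def rootAt (q : ℕ) (k : ℤ) : TV q := ⟨fun _ => 0, k, by simp, fun _ _ => rfl⟩

/-- The Diestel–Leader graph `DL(q,r)`. -/
def DL (q r : ℕ) := {x : TV q × TV r // x.1.k + x.2.k = 0}

/-- The root `o = o₁o₂` of `DL(q,r)`. -/
def oDL (q r : ℕ) : DL q r := ⟨(rootAt q 0, rootAt r 0), by simp [rootAt]⟩

/-- The projected transition matrix `P₁ = P_{1,α}` on `T_q`. -/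
def p1 (q : ℕ) (α : ℝ) (x y : TV q) : ℝ :=
  if pred y = x then α / (q : ℝ) else if y = pred x then 1 - α else 0

/-- The projected transition matrix `P₂ = P_{2,1-α}` on `T_r`. -/
def p2 (r : ℕ) (α : ℝ) (x y : TV r) : ℝ :=
  if y = pred x then α else if pred y = x then (1 - α) / (r : ℝ) else 0

/-- The transition matrix `P_α` on `DL(q,r)`. -/
def pDL (q r : ℕ) (α : ℝ) (x y : DL q r) : ℝ :=
  if pred y.val.1 = x.val.1 ∧ y.val.2 = pred x.val.2 then α / (q : ℝ)
  else if y.val.1 = pred x.val.1 ∧ pred y.val.2 = x.val.2 then (1 - α) / (r : ℝ)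
  else 0


/-- Ends `ξ ∈ ∂*T_q`: configurations whose support is bounded below. -/
def BoundedBelowSupp (q : ℕ) (ξ : ℤ → ZMod q) : Prop := ∃ N : ℤ, ∀ n < N, ξ n = 0

/-- Configurations whose support is bounded above. -/
def BoundedAboveSupp (q : ℕ) (ξ : ℤ → ZMod q) : Prop := ∃ N : ℤ, ∀ n > N, ξ n = 0

/-- The confluent level `b(x,ξ)` (level of `x ⋏ ξ` w.r.t. `ω`) of a vertex `x ∈ T_q`
and an end `ξ ∈ ∂*T_q`. -/
def bconf (q : ℕ) (x : TV q) (ξ : ℤ → ZMod q) : ℤ :=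
  sInf ({m : ℤ | m ≤ x.k ∧ ξ (m + 1) ≠ x.σ (m + 1 - x.k)} ∪ {x.k})

/-- `F₁⁻ = F₁(x,x⁻) = min {1, (1-α)/α}`. -/
def F1m (α : ℝ) : ℝ := min 1 ((1 - α) / α)
/-- `F₁⁺ = F₁(x⁻,x) = min {1/q, α/((1-α)q)}`. -/
def F1p (q : ℕ) (α : ℝ) : ℝ := min (1 / (q : ℝ)) (α / ((1 - α) * (q : ℝ)))
/-- `F₂⁻ = min {1, α/(1-α)}`. -/
def F2m (α : ℝ) : ℝ := min 1 (α / (1 - α))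
/-- `F₂⁺ = min {1/r, (1-α)/(αr)}`. -/
def F2p (r : ℕ) (α : ℝ) : ℝ := min (1 / (r : ℝ)) ((1 - α) / (α * (r : ℝ)))

/-- The Martin kernel `K₁(·,ξ₁)` on `T_q`, `ξ₁ ∈ ∂*T_q`. -/
def K1 (q : ℕ) (α : ℝ) (x : TV q) (ξ : ℤ → ZMod q) : ℝ :=
  F1m α ^ x.k * (F1m α * F1p q α) ^ (bconf q (rootAt q 0) ξ - bconf q x ξ)

/-- The Martin kernel `K₂(·,ξ₂)` on `T_r`, `ξ₂ ∈ ∂*T_r`. -/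
def K2 (r : ℕ) (α : ℝ) (x : TV r) (ξ : ℤ → ZMod r) : ℝ :=
  F2m α ^ x.k * (F2m α * F2p r α) ^ (bconf r (rootAt r 0) ξ - bconf r x ξ)

/-- The vertex `u_m = (σ_m, m)` on the geodesic from `ω` to the end encoded by `ξ`. -/
def rayVertex (q : ℕ) (ξ : ℤ → ZMod q) (hξ : BoundedBelowSupp q ξ) (m : ℤ) : TV q where
  σ := fun n => if n ≤ 0 then ξ (m + n) else 0
  k := m
  fin := by
    obtain ⟨N, hN⟩ := hξ
    apply Set.Finite.subset (Set.finite_Icc (N - m) 0)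
    intro n hn
    simp only [Function.mem_support] at hn
    by_cases hle : n ≤ 0
    · simp only [hle, if_true] at hn
      have : ¬ (m + n < N) := fun hc => hn (hN _ hc)
      exact Set.mem_Icc.mpr ⟨by omega, hle⟩
    · simp [hle] at hn
  upz := fun n hn => by simp [not_le.mpr hn]

/-- The rooted subtree `S₁ = S₁^{(n)} ⊆ T_q` with root `a₁ = (0,-n)`. -/
def S1 (q : ℕ) (n : ℕ) : Set (TV q) :=
  {x | -(n : ℤ) ≤ x.k ∧ x.k ≤ (n : ℤ) ∧ pred^[(x.k + (n : ℤ)).toNat] x = rootAt q (-(n : ℤ))}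

/-- The set of leaves `∂*S₁` of `S₁^{(n)}`. -/
def S1leaves (q : ℕ) (n : ℕ) : Set (TV q) := {x | x ∈ S1 q n ∧ x.k = (n : ℤ)}

/-- The boundary `∂S₁ = {a₁} ∪ ∂*S₁` of `S₁^{(n)}`. -/
def S1bd (q : ℕ) (n : ℕ) : Set (TV q) := insert (rootAt q (-(n : ℤ))) (S1leaves q n)

/-- The horocyclic product `S = S^{(n)}` of `S₁` and `S₂` inside `DL(q,r)`. -/
def Sdl (q r : ℕ) (n : ℕ) : Set (DL q r) := {x | x.val.1 ∈ S1 q n ∧ x.val.2 ∈ S1 r n}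

/-- The boundary `∂S = (∂*S₁ × {a₂}) ∪ ({a₁} × ∂*S₂)` of `S^{(n)}`. -/
def Sbd (q r : ℕ) (n : ℕ) : Set (DL q r) :=
  {x | (x.val.1 ∈ S1leaves q n ∧ x.val.2 = rootAt r (-(n : ℤ))) ∨
       (x.val.1 = rootAt q (-(n : ℤ)) ∧ x.val.2 ∈ S1leaves r n)}

/-- A leaf `y₁ ∈ ∂*S₁` together with `a₂` gives a vertex `y₁a₂` of `DL(q,r)`. -/
def liftLeaf1 (q r : ℕ) (n : ℕ) (y : TV q) (hy : y ∈ S1leaves q n) : DL q r :=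
  ⟨(y, rootAt r (-(n : ℤ))), by have h2 := hy.2; show y.k + (-(n : ℤ)) = 0; omega⟩

/-- The vertex `a₁y₂` of `DL(q,r)` for a leaf `y₂ ∈ ∂*S₂`. -/
def liftLeaf2 (q r : ℕ) (n : ℕ) (y : TV r) (hy : y ∈ S1leaves r n) : DL q r :=
  ⟨(rootAt q (-(n : ℤ)), y), by have h2 := hy.2; show (-(n : ℤ)) + y.k = 0; omega⟩



/-- Elements of the lamplighter group `Γ = ℤ_q ≀ ℤ`: pairs `(η,k)` with `η`
finitely supported. -/
structure LP (q : ℕ) where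
  η : ℤ → ZMod q
  k : ℤ
  fin : (Function.support η).Finite

/-- The identity element `e = (0,0)` of `ℤ_q ≀ ℤ`. -/
def eLP (q : ℕ) : LP q := ⟨fun _ => 0, 0, by simp⟩

/-- Multiplication in `ℤ_q ≀ ℤ`: `(η,k)(η',k') = (η + η'(· − k), k + k')`. -/
def lmul {q : ℕ} (g h : LP q) : LP q where
  η := fun n => g.η n + h.η (n - g.k)
  k := g.k + h.k
  fin := by
    have hinj : Function.Injective (fun n : ℤ => n - g.k) := sub_left_injective
    apply Set.Finite.subset (Set.Finite.union g.fin (h.fin.preimage hinj.injOn))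
    intro n hn
    simp only [Function.mem_support] at hn
    by_cases h1 : g.η n = 0
    · right
      simp only [Set.mem_preimage, Function.mem_support]
      intro h2
      exact hn (by rw [h1, h2, add_zero])
    · left; exact h1

/-- The configuration `δ_j^ℓ` with value `ℓ` at `j` and `0` elsewhere. -/
def deltaCfg (q : ℕ) (j : ℤ) (ℓ : ZMod q) : ℤ → ZMod q := fun n => if n = j then ℓ else 0

/-- The group element `(δ_j^ℓ, k) ∈ ℤ_q ≀ ℤ`. -/
def deltaLP (q : ℕ) (j : ℤ) (ℓ : ZMod q) (k : ℤ) : LP q :=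
  ⟨deltaCfg q j ℓ, k, by
    apply Set.Finite.subset (Set.finite_singleton j)
    intro n hn
    simp only [Function.mem_support, deltaCfg] at hn
    by_cases h : n = j
    · simpa using h
    · simp [h] at hn⟩


/-- Adjacency in the tree `T_q`: one vertex is the predecessor of the other. -/
def adjT {q : ℕ} (x y : TV q) : Prop := pred x = y ∨ pred y = x

/-- Adjacency in `DL(q,r)`. -/
def adjDL {q r : ℕ} (x y : DL q r) : Prop :=
  adjT x.val.1 y.val.1 ∧ adjT x.val.2 y.val.2

/-- The identification `Φ : ℤ_q ≀ ℤ → DL(q,q)`, `Φ(η,k) = (η_k⁻,k)(η_k⁺,-k)`. -/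
def Phi (q : ℕ) (g : LP q) : DL q q :=
  ⟨(⟨fun n => if n ≤ 0 then g.η (g.k + n) else 0, g.k,
      fin_aux g.η g.fin (fun n => g.k + n) (add_right_injective g.k),
      fun n hn => by simp [not_le.mpr hn]⟩,
    ⟨fun n => if n ≤ 0 then g.η (g.k + 1 - n) else 0, -g.k,
      fin_aux g.η g.fin (fun n => g.k + 1 - n) sub_right_injective,
      fun n hn => by simp [not_le.mpr hn]⟩),
   by show g.k + -g.k = 0; omega⟩

/-- The transition matrix `Q_α` of the switch–walk–switch walk on `DL^s(q,r)`. -/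
def qDL (q r : ℕ) (α : ℝ) (x y : DL q r) : ℝ :=
  if pred (pred y.val.1) = pred x.val.1 ∧ y.val.2 = pred x.val.2 then α / ((q : ℝ) ^ 2)
  else if pred y.val.1 = pred (pred x.val.1) ∧ pred y.val.2 = x.val.2 then
    (1 - α) / ((q : ℝ) * (r : ℝ))
  else 0

/-- The horocyclic product `D'` of `T_q` and `T_r` at level sum `-1`. -/
def DL' (q r : ℕ) := {x : TV q × TV r // x.1.k + x.2.k = -1}

/-- The transition matrix `P'` on `D'` (same rule as `P_α`). -/
def pDL' (q r : ℕ) (α : ℝ) (x y : DL' q r) : ℝ :=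
  if pred y.val.1 = x.val.1 ∧ y.val.2 = pred x.val.2 then α / (q : ℝ)
  else if y.val.1 = pred x.val.1 ∧ pred y.val.2 = x.val.2 then (1 - α) / (r : ℝ)
  else 0

/-- The map `x₁x₂ ↦ x₁⁻x₂` from `DL^s(q,r)` onto `D'`. -/
def toDL' {q r : ℕ} (x : DL q r) : DL' q r :=
  ⟨(pred x.val.1, x.val.2), by
    have h := x.property; show x.val.1.k - 1 + x.val.2.k = -1; omega⟩

/-- Harmonicity for the simple ("walk forward and switch, or switch and walk
backward") lamplighter walk on `ℤ_q ≀ ℤ`, whose law is uniform on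
`{(δ₁^ℓ,1), (δ₀^ℓ,-1) : ℓ ∈ ZMod q}`. -/
def SRWHarmonic (q : ℕ) [NeZero q] (h : LP q → ℝ) : Prop :=
  ∀ g : LP q,
    (∑ ℓ : ZMod q, (h (lmul g (deltaLP q 1 ℓ 1)) + h (lmul g (deltaLP q 0 ℓ (-1)))))
      / (2 * (q : ℝ)) = h g

/-- The step `(δ₀^ℓ + δ₁^m, 1)` of the switch–walk–switch walk. -/
def swsStepP (q : ℕ) (ℓ m : ZMod q) : LP q :=
  ⟨fun n => if n = 0 then ℓ else if n = 1 then m else 0, 1, by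
    apply Set.Finite.subset ((Set.finite_singleton 1).insert (0:ℤ))
    intro n hn
    simp only [Function.mem_support] at hn
    by_cases h0 : n = 0
    · simp [h0]
    · by_cases h1 : n = 1
      · simp [h1]
      · simp [h0, h1] at hn⟩

/-- The step `(δ₀^ℓ + δ_{-1}^m, -1)` of the switch–walk–switch walk. -/
def swsStepM (q : ℕ) (ℓ m : ZMod q) : LP q :=
  ⟨fun n => if n = 0 then ℓ else if n = -1 then m else 0, -1, by
    apply Set.Finite.subset ((Set.finite_singleton (-1:ℤ)).insert (0:ℤ))
    intro n hn
    simp only [Function.mem_support] at hn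
    by_cases h0 : n = 0
    · simp [h0]
    · by_cases h1 : n = (-1 : ℤ)
      · simp [h1]
      · simp [h0, h1] at hn⟩

/-- Harmonicity for the switch–walk–switch lamplighter walk on `ℤ_q ≀ ℤ`, whose law
is uniform on `{(δ₀^ℓ + δ₁^m, 1), (δ₀^ℓ + δ_{-1}^m, -1) : ℓ, m ∈ ZMod q}`. -/
def SWSHarmonic (q : ℕ) [NeZero q] (h : LP q → ℝ) : Prop :=
  ∀ g : LP q,
    (∑ ℓ : ZMod q, ∑ m : ZMod q,
        (h (lmul g (swsStepP q ℓ m)) + h (lmul g (swsStepM q ℓ m))))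
      / (2 * (q : ℝ) ^ 2) = h g

/-- The positive defect `df⁺((η,k),ξ₁)`. -/
def dfPlus (q : ℕ) (g : LP q) (ξ : ℤ → ZMod q) : ℤ :=
  sInf ({n : ℤ | n ≤ g.k ∧ ξ (n + 1) ≠ g.η (n + 1)} ∪ {g.k}) -
    sInf ({m : ℤ | m ≤ 0 ∧ ξ (m + 1) ≠ 0} ∪ {0})

/-- The negative defect `df⁻((η,k),ξ₂)`. -/
def dfMinus (q : ℕ) (g : LP q) (ξ : ℤ → ZMod q) : ℤ :=
  sSup ({m : ℤ | 0 < m ∧ ξ m ≠ 0} ∪ {0}) -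
    sSup ({n : ℤ | g.k < n ∧ ξ n ≠ g.η n} ∪ {g.k})

/-- The defect `df⊕((η,k),ξ₁)` for the switch–walk–switch walk. -/
def dfOPlus (q : ℕ) (g : LP q) (ξ : ℤ → ZMod q) : ℤ :=
  sInf ({n : ℤ | n ≤ g.k ∧ ξ n ≠ g.η n} ∪ {g.k}) -
    sInf ({m : ℤ | m ≤ 0 ∧ ξ m ≠ 0} ∪ {0})

lemma TV.ext' {q : ℕ} {x y : TV q} (hσ : x.σ = y.σ) (hk : x.k = y.k) : x = y := by
  cases x; cases y; simp_all

lemma LP.ext' {q : ℕ} {g h : LP q} (hη : g.η = h.η) (hk : g.k = h.k) : g = h := by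
  cases g; cases h; simp_all

lemma pred_phi1_eq {q : ℕ} (g h : LP q) :
    pred (Phi q g).val.1 = (Phi q h).val.1 ↔
      h.k = g.k - 1 ∧ ∀ m ≤ h.k, h.η m = g.η m := by
  constructor
  · intro he
    have hk : g.k - 1 = h.k := congrArg TV.k he
    refine ⟨hk.symm, fun m hm => ?_⟩
    have hσ := congrFun (congrArg TV.σ he) (m - h.k)
    have e1 : (pred (Phi q g).val.1).σ (m - h.k) =
        if m - h.k ≤ 0 then (if m - h.k - 1 ≤ 0 then g.η (g.k + (m - h.k - 1)) else 0)
        else 0 := rfl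
    have e2 : (Phi q h).val.1.σ (m - h.k) =
        if m - h.k ≤ 0 then h.η (h.k + (m - h.k)) else 0 := rfl
    rw [e1, e2, if_pos (show m - h.k ≤ (0:ℤ) by omega),
      if_pos (show m - h.k - 1 ≤ (0:ℤ) by omega),
      if_pos (show m - h.k ≤ (0:ℤ) by omega),
      show g.k + (m - h.k - 1) = m by omega, show h.k + (m - h.k) = m by omega] at hσ
    exact hσ.symm
  · rintro ⟨hk, hη⟩
    refine TV.ext' ?_ (show g.k - 1 = h.k by omega)
    funext n
    show (if n ≤ 0 then (if n - 1 ≤ 0 then g.η (g.k + (n - 1)) else 0) else 0) =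
      (if n ≤ 0 then h.η (h.k + n) else 0)
    by_cases hn : n ≤ 0
    · rw [if_pos hn, if_pos (show n - 1 ≤ (0:ℤ) by omega), if_pos hn,
        show g.k + (n - 1) = h.k + n by omega]
      exact (hη (h.k + n) (by omega)).symm
    · rw [if_neg hn, if_neg hn]

lemma pred_phi2_eq {q : ℕ} (g h : LP q) :
    pred (Phi q g).val.2 = (Phi q h).val.2 ↔
      h.k = g.k + 1 ∧ ∀ m, g.k + 2 ≤ m → h.η m = g.η m := by
  constructor
  · intro he
    have hk : -g.k - 1 = -h.k := congrArg TV.k he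
    refine ⟨by omega, fun m hm => ?_⟩
    have hσ := congrFun (congrArg TV.σ he) (g.k + 2 - m)
    have e1 : (pred (Phi q g).val.2).σ (g.k + 2 - m) =
        if g.k + 2 - m ≤ 0 then
          (if g.k + 2 - m - 1 ≤ 0 then g.η (g.k + 1 - (g.k + 2 - m - 1)) else 0)
        else 0 := rfl
    have e2 : (Phi q h).val.2.σ (g.k + 2 - m) =
        if g.k + 2 - m ≤ 0 then h.η (h.k + 1 - (g.k + 2 - m)) else 0 := rfl
    rw [e1, e2, if_pos (show g.k + 2 - m ≤ (0:ℤ) by omega),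
      if_pos (show g.k + 2 - m - 1 ≤ (0:ℤ) by omega),
      if_pos (show g.k + 2 - m ≤ (0:ℤ) by omega),
      show g.k + 1 - (g.k + 2 - m - 1) = m by omega,
      show h.k + 1 - (g.k + 2 - m) = m by omega] at hσ
    exact hσ.symm
  · rintro ⟨hk, hη⟩
    refine TV.ext' ?_ (show -g.k - 1 = -h.k by omega)
    funext n
    show (if n ≤ 0 then (if n - 1 ≤ 0 then g.η (g.k + 1 - (n - 1)) else 0) else 0) =
      (if n ≤ 0 then h.η (h.k + 1 - n) else 0)
    by_cases hn : n ≤ 0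
    · rw [if_pos hn, if_pos (show n - 1 ≤ (0:ℤ) by omega), if_pos hn,
        show g.k + 1 - (n - 1) = h.k + 1 - n by omega]
      exact (hη (h.k + 1 - n) (by omega)).symm
    · rw [if_neg hn, if_neg hn]

/-- `DL(q,q)` is a Cayley graph of the lamplighter group `ℤ_q ≀ ℤ`. -/
theorem cayley_lamplighter (q : ℕ) (hq : 2 ≤ q) :
    Function.Bijective (Phi q) ∧
    ∀ g h : LP q, adjDL (Phi q g) (Phi q h) ↔
      ∃ ℓ : ZMod q, h = lmul g (deltaLP q 1 ℓ 1) ∨ h = lmul g (deltaLP q 0 ℓ (-1)) := by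
  constructor
  · constructor
    · -- injectivity
      intro g h hgh
      have h1 : (Phi q g).val.1 = (Phi q h).val.1 := by rw [hgh]
      have h2 : (Phi q g).val.2 = (Phi q h).val.2 := by rw [hgh]
      have hk : g.k = h.k := congrArg TV.k h1
      have hσ1 := congrArg TV.σ h1
      have hσ2 := congrArg TV.σ h2
      refine LP.ext' ?_ hk
      funext m
      rcases le_or_gt m g.k with hm | hm
      · have hthis := congrFun hσ1 (m - g.k)
        have e1 : (Phi q g).val.1.σ (m - g.k) =
            if m - g.k ≤ 0 then g.η (g.k + (m - g.k)) else 0 := rfl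
        have e2 : (Phi q h).val.1.σ (m - g.k) =
            if m - g.k ≤ 0 then h.η (h.k + (m - g.k)) else 0 := rfl
        rw [e1, e2, if_pos (show m - g.k ≤ (0:ℤ) by omega),
          if_pos (show m - g.k ≤ (0:ℤ) by omega),
          show g.k + (m - g.k) = m by omega, show h.k + (m - g.k) = m by omega] at hthis
        exact hthis
      · have hthis := congrFun hσ2 (g.k + 1 - m)
        have e1 : (Phi q g).val.2.σ (g.k + 1 - m) =
            if g.k + 1 - m ≤ 0 then g.η (g.k + 1 - (g.k + 1 - m)) else 0 := rfl
        have e2 : (Phi q h).val.2.σ (g.k + 1 - m) =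
            if g.k + 1 - m ≤ 0 then h.η (h.k + 1 - (g.k + 1 - m)) else 0 := rfl
        rw [e1, e2, if_pos (show g.k + 1 - m ≤ (0:ℤ) by omega),
          if_pos (show g.k + 1 - m ≤ (0:ℤ) by omega),
          show g.k + 1 - (g.k + 1 - m) = m by omega,
          show h.k + 1 - (g.k + 1 - m) = m by omega] at hthis
        exact hthis
    · -- surjectivity
      intro x
      set k := x.val.1.k with hkdef
      refine ⟨⟨fun m => if m ≤ k then x.val.1.σ (m - k) else x.val.2.σ (k + 1 - m), k, ?_⟩, ?_⟩
      · apply Set.Finite.subset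
          ((x.val.1.fin.image (· + k)).union (x.val.2.fin.image (k + 1 - ·)))
        intro m hm
        simp only [Function.mem_support] at hm
        by_cases hle : m ≤ k
        · refine Or.inl ⟨m - k, ?_, by ring⟩
          rw [if_pos hle] at hm
          exact hm
        · refine Or.inr ⟨k + 1 - m, ?_, by ring⟩
          rw [if_neg hle] at hm
          exact hm
      · refine Subtype.ext (Prod.ext ?_ ?_)
        · refine TV.ext' ?_ rfl
          funext n
          show (if n ≤ 0 then
              (if k + n ≤ k then x.val.1.σ (k + n - k) else x.val.2.σ (k + 1 - (k + n)))
            else 0) = x.val.1.σ n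
          by_cases hn : n ≤ 0
          · rw [if_pos hn, if_pos (show k + n ≤ k by omega), show k + n - k = n by ring]
          · rw [if_neg hn, x.val.1.upz n (by omega)]
        · refine TV.ext' ?_ ?_
          · funext n
            show (if n ≤ 0 then
                (if k + 1 - n ≤ k then x.val.1.σ (k + 1 - n - k)
                  else x.val.2.σ (k + 1 - (k + 1 - n)))
              else 0) = x.val.2.σ n
            by_cases hn : n ≤ 0
            · rw [if_pos hn, if_neg (show ¬ (k + 1 - n ≤ k) by omega),
                show k + 1 - (k + 1 - n) = n by ring]
            · rw [if_neg hn, x.val.2.upz n (by omega)]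
          · have := x.property
            show -k = x.val.2.k
            omega
  · -- adjacency
    intro g h
    constructor
    · rintro ⟨ha1 | ha1, ha2 | ha2⟩
      · obtain ⟨e1, -⟩ := (pred_phi1_eq g h).mp ha1
        obtain ⟨e2, -⟩ := (pred_phi2_eq g h).mp ha2
        omega
      · -- minus case: h = g · (δ₀^ℓ, -1)
        obtain ⟨hk1, hlow⟩ := (pred_phi1_eq g h).mp ha1
        obtain ⟨hk2, hhigh⟩ := (pred_phi2_eq h g).mp ha2
        refine ⟨h.η g.k - g.η g.k, Or.inr ?_⟩
        refine LP.ext' ?_ (show h.k = g.k + (-1) by omega)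
        funext m
        show h.η m = g.η m + (if m - g.k = 0 then h.η g.k - g.η g.k else 0)
        by_cases hm : m = g.k
        · subst hm
          rw [if_pos (show g.k - g.k = 0 by ring)]
          ring
        · rw [if_neg (show ¬ (m - g.k = 0) by omega), add_zero]
          rcases lt_or_gt_of_ne hm with hlt | hgt
          · exact hlow m (by omega)
          · exact (hhigh m (by omega)).symm
      · -- plus case: h = g · (δ₁^ℓ, 1)
        obtain ⟨hk1, hlow⟩ := (pred_phi1_eq h g).mp ha1
        obtain ⟨hk2, hhigh⟩ := (pred_phi2_eq g h).mp ha2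
        refine ⟨h.η (g.k + 1) - g.η (g.k + 1), Or.inl ?_⟩
        refine LP.ext' ?_ (show h.k = g.k + 1 by omega)
        funext m
        show h.η m = g.η m + (if m - g.k = 1 then h.η (g.k + 1) - g.η (g.k + 1) else 0)
        by_cases hm : m = g.k + 1
        · subst hm
          rw [if_pos (show g.k + 1 - g.k = 1 by ring)]
          ring
        · rw [if_neg (show ¬ (m - g.k = 1) by omega), add_zero]
          rcases lt_or_gt_of_ne hm with hlt | hgt
          · exact (hlow m (by omega)).symm
          · exact hhigh m (by omega)
      · obtain ⟨e1, -⟩ := (pred_phi1_eq h g).mp ha1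
        obtain ⟨e2, -⟩ := (pred_phi2_eq h g).mp ha2
        omega
    · rintro ⟨ℓ, rfl | rfl⟩
      · -- plus step
        set s := deltaLP q 1 ℓ 1 with hs
        have hsk : (lmul g s).k = g.k + 1 := rfl
        refine ⟨Or.inr ?_, Or.inl ?_⟩
        · refine (pred_phi1_eq (lmul g s) g).mpr ⟨by omega, fun m hm => ?_⟩
          show g.η m = g.η m + (if m - g.k = 1 then ℓ else 0)
          rw [if_neg (show ¬ (m - g.k = 1) by omega), add_zero]
        · refine (pred_phi2_eq g (lmul g s)).mpr ⟨by omega, fun m hm => ?_⟩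
          show g.η m + (if m - g.k = 1 then ℓ else 0) = g.η m
          rw [if_neg (show ¬ (m - g.k = 1) by omega), add_zero]
      · -- minus step
        set s := deltaLP q 0 ℓ (-1) with hs
        have hsk : (lmul g s).k = g.k + (-1) := rfl
        refine ⟨Or.inl ?_, Or.inr ?_⟩
        · refine (pred_phi1_eq g (lmul g s)).mpr ⟨by omega, fun m hm => ?_⟩
          have hm' : m ≤ g.k + (-1) := hm
          show g.η m + (if m - g.k = 0 then ℓ else 0) = g.η m
          rw [if_neg (show ¬ (m - g.k = 0) by omega), add_zero]
        · refine (pred_phi2_eq (lmul g s) g).mpr ⟨by omega, fun m hm => ?_⟩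
          have hm' : g.k + (-1) + 2 ≤ m := hm
          show g.η m = g.η m + (if m - g.k = 0 then ℓ else 0)
          rw [if_neg (show ¬ (m - g.k = 0) by omega), add_zero]

end LampDL
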